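/- Let SR ∈ ℝ^{M×M} be invertible, L the associated generalized Laplacian on M ∪ {𝟎} (with M×M block SR, 𝟎-row −𝟙ᵀ(SR) on M, zero 𝟎-column), and μ = e_𝟎 its stationary distribution. For m ∈ M consider the perturbation of the edge (𝟎, m): L(ε) = L + ε(E_{m𝟎} − E_{𝟎𝟎}). Then the response vector δ = dμ(ε)/dε|_{ε=0} restricted to the coordinates in M equals −(SR)^{−1} e_m. -/

import Mathlib

/-- The generalized Laplacian on `Option M` (`none = 𝟎`) built from a square
matrix `A`: `M × M` block `A`, `𝟎`-row on `M` the negative column sums of `A`,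
zero `𝟎`-column. -/
def extL {M : Type*} [Fintype M] (A : Matrix M M ℝ) :
    Matrix (Option M) (Option M) ℝ :=
  fun i j =>
    match i, j with
    | none, none => 0
    | none, some m => -∑ m' : M, A m' m
    | some _, none => 0
    | some m, some m' => A m m'

/-- For invertible `A = S R`, consider the perturbation of the edge `(𝟎, m)`:
`L(ε) = extL A + ε (E_{m𝟎} - E_{𝟎𝟎})`, with stationary distribution `μ(ε)`
characterized by `L(ε)^{(𝟎)} μ(ε) = e_𝟎` (the superscript `(𝟎)` replaces the
`𝟎`-row by all ones). The response `δ = dμ(ε)/dε|₀`, restricted to the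
coordinates in `M`, equals `-A⁻¹ e_m`. -/
theorem stmt17 {M : Type*} [Fintype M] [DecidableEq M] (A : Matrix M M ℝ)
    (hA : IsUnit A.det) (m : M)
    (μ : ℝ → Option M → ℝ) (δ : Option M → ℝ)
    (hμ : ∀ᶠ ε in nhds (0 : ℝ),
      ((extL A + ε • (Matrix.single (some m) (none : Option M) (1 : ℝ) -
          Matrix.single (none : Option M) (none : Option M) (1 : ℝ))).updateRow
          none (1 : Option M → ℝ)).mulVec (μ ε) = Pi.single (none : Option M) 1)
    (hδ : HasDerivAt μ δ 0) :
    (fun m' : M => δ (some m')) = -A⁻¹.mulVec (Pi.single m 1) := by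
  have hcomp : ∀ j, HasDerivAt (fun ε => μ ε j) (δ j) 0 := fun j => hasDerivAt_pi.mp hδ j
  set D : Matrix (Option M) (Option M) ℝ :=
    Matrix.single (some m) (none : Option M) (1 : ℝ) -
      Matrix.single (none : Option M) (none : Option M) (1 : ℝ) with hD
  -- row formula for rows in M
  have hrow : ∀ (ε : ℝ) (m'' : M),
      (((extL A + ε • D).updateRow none (1 : Option M → ℝ)).mulVec (μ ε)) (some m'')
        = ε * (if m'' = m then 1 else 0) * μ ε none
          + ∑ m', A m'' m' * μ ε (some m') := by
    intro ε m''
    rw [Matrix.mulVec, dotProduct, Fintype.sum_option]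
    simp only [Matrix.updateRow_ne (Option.some_ne_none m''), Matrix.add_apply,
      Matrix.smul_apply, hD, Matrix.sub_apply, Matrix.single, Matrix.of_apply]
    simp [extL, mul_comm, eq_comm]
  -- value at 0
  have h0 := hμ.self_of_nhds
  have hA0 : A.mulVec (fun m' => μ 0 (some m')) = 0 := by
    funext m''
    have := congrFun h0 (some m'')
    rw [hrow 0 m''] at this
    simpa [Matrix.mulVec, dotProduct] using this
  have hμ0some : ∀ m', μ 0 (some m') = 0 := by
    have : (fun m' => μ 0 (some m')) = 0 := by
      have := congrArg (fun v => A⁻¹.mulVec v) hA0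
      simpa [Matrix.mulVec_mulVec, Matrix.nonsing_inv_mul A hA] using this
    exact fun m' => congrFun this m'
  have hμ0none : μ 0 none = 1 := by
    have := congrFun h0 none
    rw [Matrix.mulVec, dotProduct, Fintype.sum_option] at this
    simpa [Matrix.updateRow_apply, hμ0some] using this
  -- key derivative identity
  have key : ∀ m'' : M,
      (∑ m', A m'' m' * δ (some m')) + (if m'' = m then 1 else 0) = 0 := by
    intro m''
    set c : ℝ := if m'' = m then 1 else 0 with hc
    have hg : HasDerivAt
        (fun ε => ε * c * μ ε none + ∑ m', A m'' m' * μ ε (some m'))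
        ((1 * c * μ 0 none + 0 * c * δ none) + ∑ m', A m'' m' * δ (some m')) 0 := by
      refine HasDerivAt.add ?_ (HasDerivAt.fun_sum fun m' _ => (hcomp (some m')).const_mul _)
      exact ((hasDerivAt_id 0).mul_const c).mul (hcomp none)
    have hzero : HasDerivAt
        (fun ε : ℝ => (0 : ℝ))
        ((1 * c * μ 0 none + 0 * c * δ none) + ∑ m', A m'' m' * δ (some m')) 0 := by
      refine hg.congr_of_eventuallyEq ?_
      filter_upwards [hμ] with ε hε
      have := congrFun hε (some m'')
      rw [hrow ε m'', ← hc] at this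
      simpa using this.symm
    have := (hasDerivAt_const (0:ℝ) (0:ℝ)).unique hzero
    rw [hμ0none] at this
    simp only [mul_one, one_mul, zero_mul, add_zero, zero_add] at this
    linarith [this]
  have hmv : A.mulVec (fun m' => δ (some m')) = -(Pi.single m 1) := by
    funext m''
    have := key m''
    simp only [Matrix.mulVec, dotProduct, Pi.neg_apply, Pi.single_apply]
    linarith [this]
  have := congrArg (fun v => A⁻¹.mulVec v) hmv
  simpa [Matrix.mulVec_mulVec, Matrix.nonsing_inv_mul A hA, Matrix.mulVec_neg] using this
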